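/- Let a > 0, b < 0, p > 1, δ > 0, C > 0, ε > 0 be real numbers, and suppose w : [t₀, T) → (0, ∞) is the maximal solution of the Cauchy problem w'(t) = δ·|a·w(t) + b·w(t)^p| − C·w(t)/t with w(t₀) > (−a/b)^{1/(p−1)} + ε, where t₀ > 0 is large enough that δ·|a·x + b·x^p|/x − C/t₀ > 0 for all x ≥ (−a/b)^{1/(p−1)} + ε. Then w is increasing on [t₀, T) and T < ∞, i.e., w blows up in finite time. -/

import Mathlib

open Set Real Filter Topology

lemma lin_growth (f f' : ℝ → ℝ) (m s₀ s₁ : ℝ) (h : s₀ ≤ s₁)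
    (hd : ∀ t ∈ Set.Icc s₀ s₁, HasDerivAt f (f' t) t)
    (hm : ∀ t ∈ Set.Icc s₀ s₁, m ≤ f' t) :
    f s₀ + m * (s₁ - s₀) ≤ f s₁ := by
  set g : ℝ → ℝ := fun t => f t - m * t with hg
  have hgd : ∀ t ∈ Set.Icc s₀ s₁, HasDerivAt g (f' t - m) t := by
    intro t ht
    have := (hd t ht).sub ((hasDerivAt_id t).const_mul m)
    simp only [mul_one] at this
    exact this
  have hmono : MonotoneOn g (Set.Icc s₀ s₁) := by
    apply monotoneOn_of_deriv_nonneg (convex_Icc s₀ s₁)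
    · exact fun t ht => (hgd t ht).continuousAt.continuousWithinAt
    · intro t ht
      exact ((hgd t (interior_subset ht)).differentiableAt).differentiableWithinAt
    · intro t ht
      rw [(hgd t (interior_subset ht)).deriv]
      have := hm t (interior_subset ht)
      linarith
  have := hmono (Set.left_mem_Icc.2 h) (Set.right_mem_Icc.2 h) h
  simp only [hg] at this
  linarith

set_option maxHeartbeats 2000000 in
theorem stmt_11 (a b p δ C ε t₀ : ℝ) (T : EReal)
    (ha : 0 < a) (hb : b < 0) (hp : 1 < p) (hδ : 0 < δ) (hC : 0 < C) (hε : 0 < ε)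
    (ht₀ : 0 < t₀) (hT : (t₀ : EReal) < T)
    (w : ℝ → ℝ)
    (hsol : ∀ t : ℝ, t₀ ≤ t → (t : EReal) < T →
      0 < w t ∧ HasDerivAt w (δ * |a * w t + b * w t ^ p| - C * w t / t) t)
    (hinit : w t₀ > (-a / b) ^ (1 / (p - 1)) + ε)
    (hlarge : ∀ x : ℝ, x ≥ (-a / b) ^ (1 / (p - 1)) + ε →
      δ * |a * x + b * x ^ p| / x - C / t₀ > 0)
    (hmax : ∀ T' : EReal, T < T' →
      ¬ ∃ v : ℝ → ℝ, (∀ t : ℝ, t₀ ≤ t → (t : EReal) < T' →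
          0 < v t ∧ HasDerivAt v (δ * |a * v t + b * v t ^ p| - C * v t / t) t) ∧
        ∀ t : ℝ, t₀ ≤ t → (t : EReal) < T → v t = w t) :
    StrictMonoOn w {t : ℝ | t₀ ≤ t ∧ (t : EReal) < T} ∧ T < ⊤ := by
  clear hmax
  set x₁ : ℝ := (-a / b) ^ (1 / (p - 1)) with hx₁def
  set M : ℝ := x₁ + ε with hMdef
  set I : Set ℝ := {t : ℝ | t₀ ≤ t ∧ (t : EReal) < T} with hIdef
  have hp1 : 0 < p - 1 := by linarith
  have hab : 0 < -a / b := div_pos_of_neg_of_neg (by linarith) hb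
  have hx₁pos : 0 < x₁ := Real.rpow_pos_of_pos hab _
  have hMpos : 0 < M := by positivity
  have ht₀I : t₀ ∈ I := ⟨le_refl _, hT⟩
  have hIsub : ∀ t ∈ I, ∀ s, t₀ ≤ s → s ≤ t → s ∈ I := by
    intro t ht s hs hst
    exact ⟨hs, lt_of_le_of_lt (EReal.coe_le_coe_iff.2 hst) ht.2⟩
  -- positivity of the derivative when w ≥ M
  have hpos' : ∀ t ∈ I, M ≤ w t → 0 < δ * |a * w t + b * w t ^ p| - C * w t / t := by
    intro t ht hMw
    have hwpos : 0 < w t := (hsol t ht.1 ht.2).1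
    have hl := hlarge (w t) hMw
    have h1 : C / t₀ * w t < δ * |a * w t + b * w t ^ p| := by
      have : C / t₀ < δ * |a * w t + b * w t ^ p| / w t := by linarith
      calc C / t₀ * w t < δ * |a * w t + b * w t ^ p| / w t * w t :=
            mul_lt_mul_of_pos_right this hwpos
        _ = δ * |a * w t + b * w t ^ p| := by field_simp
    have h2 : C * w t / t ≤ C / t₀ * w t := by
      rw [div_le_iff₀ (lt_of_lt_of_le ht₀ ht.1)]
      have heq : C / t₀ * w t * t = C * w t * (t / t₀) := by ring
      have h3 : 1 ≤ t / t₀ := (one_le_div ht₀).2 ht.1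
      rw [heq]
      nlinarith [mul_pos hC hwpos]
    linarith
  -- invariant: w stays ≥ M
  have hA : ∀ t ∈ I, M ≤ w t := by
    by_contra hcon
    push_neg at hcon
    obtain ⟨t₂, ht₂I, ht₂lt⟩ := hcon
    have ht₀t₂ : t₀ < t₂ := by
      rcases lt_or_eq_of_le ht₂I.1 with h | h
      · exact h
      · exfalso; rw [← h] at ht₂lt; linarith [hinit]
    have hcontOn : ContinuousOn w (Icc t₀ t₂) := fun s hs =>
      ((hsol s hs.1 (hIsub t₂ ht₂I s hs.1 hs.2).2).2.continuousAt).continuousWithinAt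
    set S : Set ℝ := Icc t₀ t₂ ∩ w ⁻¹' (Ici M) with hSdef
    have hSclosed : IsClosed S :=
      hcontOn.preimage_isClosed_of_isClosed isClosed_Icc isClosed_Ici
    have hSne : S.Nonempty := ⟨t₀, ⟨le_refl _, le_of_lt ht₀t₂⟩, le_of_lt hinit⟩
    have hScomp : IsCompact S := isCompact_Icc.of_isClosed_subset hSclosed inter_subset_left
    have hσS := hScomp.sSup_mem hSne
    set σ := sSup S with hσdef
    have hσIcc : σ ∈ Icc t₀ t₂ := hσS.1
    have hσM : M ≤ w σ := hσS.2
    have hσI : σ ∈ I := hIsub t₂ ht₂I σ hσIcc.1 hσIcc.2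
    have hσlt : σ < t₂ := lt_of_le_of_ne hσIcc.2 (fun h => by rw [h] at hσM; linarith)
    have hd := (hsol σ hσI.1 hσI.2).2
    have hdpos := hpos' σ hσI hσM
    have hslope : Tendsto (slope w σ) (𝓝[>] σ)
        (𝓝 (δ * |a * w σ + b * w σ ^ p| - C * w σ / σ)) :=
      (hasDerivAt_iff_tendsto_slope.1 hd).mono_left
        (nhdsWithin_mono σ (fun x hx => ne_of_gt hx))
    have hev1 : ∀ᶠ s in 𝓝[>] σ, 0 < slope w σ s := hslope.eventually_const_lt hdpos
    have hev2 : ∀ᶠ s in 𝓝[>] σ, s ∈ Ioc σ t₂ :=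
      eventually_mem_set.mpr (Ioc_mem_nhdsGT_of_mem ⟨le_refl σ, hσlt⟩)
    obtain ⟨s, hs1, hs2⟩ := (hev1.and hev2).exists
    have hsσ : σ < s := hs2.1
    have hws : w σ < w s := by
      rw [slope_def_field] at hs1
      rcases div_pos_iff.1 hs1 with ⟨h1, _⟩ | ⟨_, h2⟩
      · linarith
      · linarith
    have hsS : s ∈ S := ⟨⟨le_trans hσIcc.1 (le_of_lt hsσ), hs2.2⟩, by
      simp only [Set.mem_preimage, Set.mem_Ici]; linarith⟩
    have := le_csSup hScomp.bddAbove hsS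
    linarith
  have hconv : Convex ℝ I := by
    rw [convex_iff_ordConnected]
    exact ⟨fun x hx y hy z hz => hIsub y hy z (le_trans hx.1 hz.1) hz.2⟩
  have hmono : StrictMonoOn w I := by
    apply strictMonoOn_of_deriv_pos hconv
    · exact fun t ht => (hsol t ht.1 ht.2).2.continuousAt.continuousWithinAt
    · intro t ht
      have htI : t ∈ I := interior_subset ht
      rw [(hsol t htI.1 htI.2).2.deriv]
      exact hpos' t htI (hA t htI)
  refine ⟨hmono, ?_⟩
  by_contra hTne
  have hTtop : T = ⊤ := top_le_iff.1 (not_lt.1 hTne)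
  have hallI : ∀ t : ℝ, t₀ ≤ t → t ∈ I := by
    intro t ht; exact ⟨ht, hTtop ▸ EReal.coe_lt_top t⟩
  have hwpos : ∀ t : ℝ, t₀ ≤ t → 0 < w t := fun t ht => (hsol t ht (hallI t ht).2).1
  have hderiv : ∀ t : ℝ, t₀ ≤ t →
      HasDerivAt w (δ * |a * w t + b * w t ^ p| - C * w t / t) t :=
    fun t ht => (hsol t ht (hallI t ht).2).2
  set c : ℝ := δ * (-b) with hcdef
  set K : ℝ := δ * a + C / t₀ with hKdef
  have hcpos : 0 < c := mul_pos hδ (neg_pos.2 hb)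
  have hKpos : 0 < K := by
    have : 0 < C / t₀ := div_pos hC ht₀
    have : 0 < δ * a := mul_pos hδ ha
    rw [hKdef]; linarith
  have hx₁pow : x₁ ^ (p - 1) = -a / b := by
    rw [hx₁def, ← Real.rpow_mul (le_of_lt hab), one_div,
      inv_mul_cancel₀ (ne_of_gt hp1), Real.rpow_one]
  have habs : ∀ x : ℝ, M ≤ x →
      |a * x + b * x ^ p| = -(a * x + b * x ^ p) ∧ a * x + b * x ^ p < 0 := by
    intro x hx
    have hxpos : 0 < x := lt_of_lt_of_le hMpos hx
    have hx1lt : x₁ < x := by rw [hMdef] at hx; linarith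
    have hpow : x₁ ^ (p - 1) < x ^ (p - 1) :=
      Real.rpow_lt_rpow (le_of_lt hx₁pos) hx1lt hp1
    rw [hx₁pow] at hpow
    have hbx : b * x ^ (p - 1) < -a := by
      have hbne : b ≠ 0 := ne_of_lt hb
      have h1 := mul_lt_mul_of_neg_left hpow hb
      have h2 : b * (-a / b) = -a := by field_simp
      linarith
    have hxp : x ^ p = x ^ (p - 1) * x := by
      rw [← Real.rpow_add_one (ne_of_gt hxpos) (p - 1)]; congr 1; ring
    have hneg : a * x + b * x ^ p < 0 := by
      rw [hxp]
      nlinarith [mul_lt_mul_of_pos_right hbx hxpos]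
    exact ⟨abs_of_neg hneg, hneg⟩
  have hdlow : ∀ t : ℝ, t₀ ≤ t →
      c * w t ^ p - K * w t ≤ δ * |a * w t + b * w t ^ p| - C * w t / t := by
    intro t ht
    have h1 := habs (w t) (hA t (hallI t ht))
    rw [h1.1]
    have h2 : C * w t / t ≤ C * w t / t₀ :=
      div_le_div_of_nonneg_left (le_of_lt (mul_pos hC (hwpos t ht))) ht₀ ht
    have h3 : K * w t = δ * a * w t + C * w t / t₀ := by rw [hKdef]; ring
    rw [hcdef]
    nlinarith [h2, h3]
  -- step 2a: w exceeds any bound, in particular X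
  set X : ℝ := max (w t₀) ((2 * K / c) ^ (1 / (p - 1))) with hXdef
  have hexc : ∃ t₁ : ℝ, t₀ ≤ t₁ ∧ X < w t₁ := by
    by_contra hcon
    push_neg at hcon
    set g : ℝ → ℝ := fun x => δ * |a * x + b * x ^ p| - C * x / t₀ with hgdef
    have hMX : M ≤ X := le_trans (le_of_lt hinit) (le_max_left _ _)
    have hgc : ContinuousOn g (Icc M X) := by
      have h1 : ContinuousOn (fun x : ℝ => a * x + b * x ^ p) (Icc M X) := by
        apply ContinuousOn.add
        · exact continuousOn_const.mul continuousOn_id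
        · exact continuousOn_const.mul (ContinuousOn.rpow_const continuousOn_id
            (fun x hx => Or.inl (ne_of_gt (lt_of_lt_of_le hMpos hx.1))))
      exact (continuousOn_const.mul h1.abs).sub
        ((continuousOn_const.mul continuousOn_id).div_const t₀)
    obtain ⟨x₀, hx₀mem, hx₀min⟩ :=
      isCompact_Icc.exists_isMinOn ⟨M, left_mem_Icc.2 hMX⟩ hgc
    set m := g x₀ with hmdef
    have hx₀pos : 0 < x₀ := lt_of_lt_of_le hMpos hx₀mem.1
    have hmpos : 0 < m := by
      have hl := hlarge x₀ hx₀mem.1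
      have hlt : C / t₀ * x₀ < δ * |a * x₀ + b * x₀ ^ p| := by
        have h' : C / t₀ < δ * |a * x₀ + b * x₀ ^ p| / x₀ := by linarith
        calc C / t₀ * x₀ < δ * |a * x₀ + b * x₀ ^ p| / x₀ * x₀ :=
              mul_lt_mul_of_pos_right h' hx₀pos
          _ = δ * |a * x₀ + b * x₀ ^ p| := by field_simp
      have heq : C * x₀ / t₀ = C / t₀ * x₀ := by ring
      show 0 < δ * |a * x₀ + b * x₀ ^ p| - C * x₀ / t₀
      rw [heq]; linarith
    set s := t₀ + (X - w t₀) / m + 1 with hsdef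
    have hXw₀ : w t₀ ≤ X := le_max_left _ _
    have hts : t₀ ≤ s := by
      have h0 : 0 ≤ (X - w t₀) / m := div_nonneg (by linarith) (le_of_lt hmpos)
      rw [hsdef]; linarith
    have key : ∀ t ∈ Icc t₀ s, m ≤ δ * |a * w t + b * w t ^ p| - C * w t / t := by
      intro t ht
      have hwt : w t ∈ Icc M X := ⟨hA t (hallI t ht.1), hcon t ht.1⟩
      have h2 : C * w t / t ≤ C * w t / t₀ :=
        div_le_div_of_nonneg_left (le_of_lt (mul_pos hC (hwpos t ht.1))) ht₀ ht.1
      calc m ≤ g (w t) := hx₀min hwt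
        _ = δ * |a * w t + b * w t ^ p| - C * w t / t₀ := rfl
        _ ≤ _ := by linarith
    have hlg := lin_growth w
      (fun t => δ * |a * w t + b * w t ^ p| - C * w t / t) m t₀ s hts
      (fun t ht => hderiv t ht.1) key
    have hws : w s ≤ X := hcon s hts
    have hms : m * (s - t₀) = X - w t₀ + m := by
      rw [hsdef]; field_simp; ring
    linarith
  obtain ⟨t₁, ht₁, hXw⟩ := hexc
  have hW : 2 * K / c ≤ w t₁ ^ (p - 1) := by
    have hKc : (0:ℝ) ≤ 2 * K / c := by positivity
    have h1 : (2 * K / c) ^ (1 / (p - 1)) < w t₁ :=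
      lt_of_le_of_lt (le_max_right _ _) hXw
    have h2 : ((2 * K / c) ^ (1 / (p - 1))) ^ (p - 1) < w t₁ ^ (p - 1) :=
      Real.rpow_lt_rpow (Real.rpow_nonneg hKc _) h1 hp1
    rw [← Real.rpow_mul hKc, one_div, inv_mul_cancel₀ (ne_of_gt hp1),
      Real.rpow_one] at h2
    exact le_of_lt h2
  have hmono' : ∀ t : ℝ, t₁ ≤ t → w t₁ ≤ w t := by
    intro t ht
    rcases eq_or_lt_of_le ht with h | h
    · rw [h]
    · exact le_of_lt (hmono (hallI t₁ ht₁) (hallI t (le_trans ht₁ ht)) h)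
  have hd2 : ∀ t : ℝ, t₁ ≤ t →
      c / 2 * w t ^ p ≤ δ * |a * w t + b * w t ^ p| - C * w t / t := by
    intro t ht
    have ht' : t₀ ≤ t := le_trans ht₁ ht
    have h1 := hdlow t ht'
    have hwt : 0 < w t := hwpos t ht'
    have h2 : 2 * K / c ≤ w t ^ (p - 1) := le_trans hW
      (Real.rpow_le_rpow (le_of_lt (hwpos t₁ ht₁)) (hmono' t ht) (le_of_lt (by linarith : (0:ℝ) < p - 1)))
    have hxp : w t ^ p = w t ^ (p - 1) * w t := by
      rw [← Real.rpow_add_one (ne_of_gt hwt) (p - 1)]; congr 1; ring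
    have h2' : K ≤ c / 2 * w t ^ (p - 1) := by
      have hh := mul_le_mul_of_nonneg_left h2 (le_of_lt (div_pos hcpos two_pos))
      have heq : c / 2 * (2 * K / c) = K := by field_simp
      linarith
    have h3 : K * w t ≤ c / 2 * w t ^ p := by
      rw [hxp]
      nlinarith [mul_le_mul_of_nonneg_right h2' (le_of_lt hwt)]
    linarith
  set d : ℝ := (p - 1) * (c / 2) with hddef
  have hdpos : 0 < d := mul_pos hp1 (div_pos hcpos two_pos)
  have hyd : ∀ t : ℝ, t₁ ≤ t → HasDerivAt (fun t => -(w t ^ (1 - p)))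
      (-((δ * |a * w t + b * w t ^ p| - C * w t / t) * (1 - p) *
        w t ^ (1 - p - 1))) t := by
    intro t ht
    exact ((hderiv t (le_trans ht₁ ht)).rpow_const
      (Or.inl (ne_of_gt (hwpos t (le_trans ht₁ ht))))).neg
  have hyd' : ∀ t : ℝ, t₁ ≤ t → d ≤ -((δ * |a * w t + b * w t ^ p| - C * w t / t) *
      (1 - p) * w t ^ (1 - p - 1)) := by
    intro t ht
    have ht' := le_trans ht₁ ht
    have hwt : 0 < w t := hwpos t ht'
    have h1 := hd2 t ht
    have hwp : (0:ℝ) < w t ^ (1 - p - 1) := Real.rpow_pos_of_pos hwt _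
    have h2 : w t ^ (1 - p - 1) * w t ^ p = w t ^ (1 - p - 1 + p) := (Real.rpow_add hwt _ _).symm
    have h2' : w t ^ (1 - p - 1 + p) = 1 := by norm_num
    have h4 : (p - 1) * (w t ^ (1 - p - 1)) * (c / 2 * w t ^ p) ≤
        (p - 1) * (w t ^ (1 - p - 1)) *
          (δ * |a * w t + b * w t ^ p| - C * w t / t) :=
      mul_le_mul_of_nonneg_left h1 (mul_nonneg (by linarith) (le_of_lt hwp))
    have h5 : (p - 1) * (w t ^ (1 - p - 1)) * (c / 2 * w t ^ p) = d := by
      rw [hddef]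
      have he : (p - 1) * (w t ^ (1 - p - 1)) * (c / 2 * w t ^ p)
          = (p - 1) * (c / 2) * (w t ^ (1 - p - 1) * w t ^ p) := by ring
      rw [he, h2, h2', mul_one]
    nlinarith [h4, h5]
  set s₂ : ℝ := t₁ + (w t₁ ^ (1 - p)) / d + 1 with hs₂def
  have hy₁pos : 0 < w t₁ ^ (1 - p) := Real.rpow_pos_of_pos (hwpos t₁ ht₁) _
  have ht₁s₂ : t₁ ≤ s₂ := by
    have h0 : 0 ≤ w t₁ ^ (1 - p) / d := div_nonneg (le_of_lt hy₁pos) (le_of_lt hdpos)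
    rw [hs₂def]; linarith
  have hlg := lin_growth (fun t => -(w t ^ (1 - p)))
    (fun t => -((δ * |a * w t + b * w t ^ p| - C * w t / t) * (1 - p) *
      w t ^ (1 - p - 1))) d t₁ s₂ ht₁s₂
    (fun t ht => hyd t ht.1) (fun t ht => hyd' t ht.1)
  have h6 : d * (s₂ - t₁) = w t₁ ^ (1 - p) + d := by
    rw [hs₂def]; field_simp; ring
  have h7 : 0 < w s₂ ^ (1 - p) :=
    Real.rpow_pos_of_pos (hwpos s₂ (le_trans ht₁ ht₁s₂)) _
  linarith
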